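/- Fix a finite nonempty set Ω, a full-support prior μ0 ∈ Δ(Ω), α ∈ [0,1), and an arbitrary function g : Δ(Ω) → ℝ. Then the set of values { Σ_{μ∈T} τ(μ)·g(α·μ0 + (1−α)·μ) : (T,τ) a finite-support posterior distribution Bayes plausible for μ0 } equals the set of values { Σ_{μ'∈T'} τ'(μ')·g(μ') : (T',τ') a finite-support posterior distribution with Σ_{μ'∈T'} τ'(μ')·μ' = μ0 and μ'(ω) ≥ α·μ0(ω) for every μ' ∈ T' with τ'(μ') > 0 and every ω }. -/

import Mathlib

/-- A belief on a finite state space: nonnegative and sums to one. -/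
def IsBelief {Ω : Type*} [Fintype Ω] (μ : Ω → ℝ) : Prop :=
  (∀ ω, 0 ≤ μ ω) ∧ ∑ ω, μ ω = 1

/-- change of variables: the achievable values of
`Σ τ(μ)·g(α·μ0+(1−α)·μ)` over Bayes-plausible distributions of Bayesian posteriors
coincide with the achievable values of `Σ τ'(μ')·g(μ')` over distributions of
biased posteriors averaging to `μ0` whose support dominates `α·μ0` pointwise. -/
theorem stmt_4 {Ω : Type*} [Fintype Ω] [Nonempty Ω]
    (μ0 : Ω → ℝ) (hμ0 : IsBelief μ0) (hfull : ∀ ω, 0 < μ0 ω)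
    (α : ℝ) (hα : 0 ≤ α ∧ α < 1)
    (g : (Ω → ℝ) → ℝ) :
    { r : ℝ | ∃ (T : Finset (Ω → ℝ)) (τ : (Ω → ℝ) → ℝ),
        (∀ μ ∈ T, IsBelief μ) ∧ (∀ μ ∈ T, 0 ≤ τ μ) ∧ (∑ μ ∈ T, τ μ = 1) ∧
        (∀ ω, ∑ μ ∈ T, τ μ * μ ω = μ0 ω) ∧
        r = ∑ μ ∈ T, τ μ * g (fun ω => α * μ0 ω + (1 - α) * μ ω) } =
    { r : ℝ | ∃ (T' : Finset (Ω → ℝ)) (τ' : (Ω → ℝ) → ℝ),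
        (∀ μ' ∈ T', IsBelief μ') ∧ (∀ μ' ∈ T', 0 ≤ τ' μ') ∧ (∑ μ' ∈ T', τ' μ' = 1) ∧
        (∀ ω, ∑ μ' ∈ T', τ' μ' * μ' ω = μ0 ω) ∧
        (∀ μ' ∈ T', 0 < τ' μ' → ∀ ω, α * μ0 ω ≤ μ' ω) ∧
        r = ∑ μ' ∈ T', τ' μ' * g μ' } := by
  obtain ⟨hα0, hα1⟩ := hα
  have h1α : (0:ℝ) < 1 - α := by linarith
  have h1αne : (1:ℝ) - α ≠ 0 := ne_of_gt h1α
  set φ : (Ω → ℝ) → (Ω → ℝ) := fun μ ω => α * μ0 ω + (1 - α) * μ ω with hφ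
  set ψ : (Ω → ℝ) → (Ω → ℝ) := fun ν ω => (ν ω - α * μ0 ω) / (1 - α) with hψ
  have hψφ : ∀ μ, ψ (φ μ) = μ := by
    intro μ; funext ω; simp only [hφ, hψ]; field_simp; ring
  have hφψ : ∀ ν, φ (ψ ν) = ν := by
    intro ν; funext ω; simp only [hφ, hψ]; field_simp; ring
  have hφinj : Function.Injective φ := fun a b h => by
    rw [← hψφ a, h, hψφ]
  have hψinj : Function.Injective ψ := fun a b h => by
    rw [← hφψ a, h, hφψ]
  ext r
  simp only [Set.mem_setOf_eq]
  constructor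
  · rintro ⟨T, τ, hbel, hτ0, hτ1, hbar, hr⟩
    refine ⟨T.image φ, fun ν => τ (ψ ν), ?_, ?_, ?_, ?_, ?_, ?_⟩
    · rintro ν hν
      obtain ⟨μ, hμ, rfl⟩ := Finset.mem_image.mp hν
      obtain ⟨hpos, hsum⟩ := hbel μ hμ
      constructor
      · intro ω
        have := hpos ω
        have := (hfull ω).le
        have : 0 ≤ (1 - α) * μ ω := mul_nonneg h1α.le (hpos ω)
        simp only [hφ]
        nlinarith [hfull ω, hpos ω]
      · simp only [hφ]
        rw [Finset.sum_add_distrib, ← Finset.mul_sum, ← Finset.mul_sum, hμ0.2, hsum]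
        ring
    · rintro ν hν
      obtain ⟨μ, hμ, rfl⟩ := Finset.mem_image.mp hν
      show 0 ≤ τ (ψ (φ μ))
      rw [hψφ]; exact hτ0 μ hμ
    · rw [Finset.sum_image (fun a _ b _ h => hφinj h)]
      simp only [hψφ]; exact hτ1
    · intro ω
      rw [Finset.sum_image (fun a _ b _ h => hφinj h)]
      simp only [hψφ]; simp only [hφ]
      have : ∑ μ ∈ T, τ μ * (α * μ0 ω + (1 - α) * μ ω)
          = α * μ0 ω * ∑ μ ∈ T, τ μ + (1 - α) * ∑ μ ∈ T, τ μ * μ ω := by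
        rw [Finset.mul_sum, Finset.mul_sum, ← Finset.sum_add_distrib]
        exact Finset.sum_congr rfl fun μ _ => by ring
      rw [this, hτ1, hbar ω]; ring
    · rintro ν hν _ ω
      obtain ⟨μ, hμ, rfl⟩ := Finset.mem_image.mp hν
      have := (hbel μ hμ).1 ω
      simp only [hφ]
      nlinarith
    · rw [Finset.sum_image (fun a _ b _ h => hφinj h)]
      simp only [hψφ]
      exact hr
  · rintro ⟨T', τ', hbel, hτ0, hτ1, hbar, hdom, hr⟩
    set S := T'.filter (fun ν => 0 < τ' ν) with hS
    have hfil : ∀ f : (Ω → ℝ) → ℝ, ∑ ν ∈ S, τ' ν * f ν = ∑ ν ∈ T', τ' ν * f ν := by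
      intro f
      apply Finset.sum_filter_of_ne
      intro ν hν hne
      rcases lt_or_eq_of_le (hτ0 ν hν) with h | h
      · exact h
      · exact absurd (by rw [← h]; ring) hne
    have hfil1 : ∑ ν ∈ S, τ' ν = 1 := by
      have := hfil (fun _ => 1)
      simpa using this.trans (by simpa using hτ1)
    refine ⟨S.image ψ, fun μ => τ' (φ μ), ?_, ?_, ?_, ?_, ?_⟩
    · rintro μ hμ
      obtain ⟨ν, hν, rfl⟩ := Finset.mem_image.mp hμ
      have hνT : ν ∈ T' := (Finset.mem_filter.mp hν).1
      have hνpos : 0 < τ' ν := (Finset.mem_filter.mp hν).2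
      obtain ⟨hpos, hsum⟩ := hbel ν hνT
      constructor
      · intro ω
        have hd := hdom ν hνT hνpos ω
        simp only [hψ]
        exact div_nonneg (by linarith) h1α.le
      · simp only [hψ]
        rw [← Finset.sum_div]
        rw [Finset.sum_sub_distrib, hsum, ← Finset.mul_sum, hμ0.2]
        field_simp
    · rintro μ hμ
      obtain ⟨ν, hν, rfl⟩ := Finset.mem_image.mp hμ
      show 0 ≤ τ' (φ (ψ ν))
      rw [hφψ]
      exact le_of_lt (Finset.mem_filter.mp hν).2
    · rw [Finset.sum_image (fun a _ b _ h => hψinj h)]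
      simp only [hφψ]
      exact hfil1
    · intro ω
      rw [Finset.sum_image (fun a _ b _ h => hψinj h)]
      simp only [hφψ]; simp only [hψ]
      have key : (1 - α) * ∑ ν ∈ S, τ' ν * ((ν ω - α * μ0 ω) / (1 - α))
          = (1 - α) * μ0 ω := by
        rw [Finset.mul_sum]
        have hterm : ∀ ν ∈ S, (1 - α) * (τ' ν * ((ν ω - α * μ0 ω) / (1 - α)))
            = τ' ν * ν ω - (α * μ0 ω) * τ' ν := by
          intro ν _; field_simp
        rw [Finset.sum_congr rfl hterm, Finset.sum_sub_distrib, hfil (fun ν => ν ω),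
          hbar ω, ← Finset.mul_sum, hfil1]
        ring
      exact mul_left_cancel₀ h1αne key
    · rw [Finset.sum_image (fun a _ b _ h => hψinj h)]
      rw [hr, ← hfil g]
      refine Finset.sum_congr rfl fun ν _ => ?_
      show τ' ν * g ν = τ' (φ (ψ ν)) * g ((fun ω => α * μ0 ω + (1 - α) * ψ ν ω))
      have h : (fun ω => α * μ0 ω + (1 - α) * ψ ν ω) = ν := hφψ ν
      rw [h, hφψ]
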